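/- Let λ ∈ SC^(m) be a self-conjugate partition and μ its corresponding partition under the bijection φ^(m). If the largest main diagonal hook length δ_1 of λ is ≡ 1 mod 4, then the set of halved even first-column hook lengths of λ, β_{e/2}(λ) = {h_λ(i,1)/2 : h_λ(i,1) even}, equals the beta-set β(μ') of the conjugate of μ; if δ_1 ≡ 3 mod 4, then β_{e/2}(λ) = β(μ). -/

import Mathlib

/-- A partition, encoded as an antitone, eventually-zero function (0-indexed parts). -/
def IsPartition (l : ℕ → ℕ) : Prop := Antitone l ∧ ∃ N, l N = 0

/-- The conjugate partition: `conj l j` is the number of rows whose length exceeds `j`. -/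
noncomputable def conj (l : ℕ → ℕ) (j : ℕ) : ℕ := Set.ncard {i | j < l i}

/-- Hook length of the box in row `i`, column `j` (0-indexed): arm + leg + 1. -/
noncomputable def hookLen (l : ℕ → ℕ) (i j : ℕ) : ℕ :=
  (l i - (j + 1)) + (conj l j - (i + 1)) + 1

/-- A self-conjugate partition equals its conjugate. -/
def SelfConj (l : ℕ → ℕ) : Prop := conj l = l

/-- Side length of the Durfee square: the number of boxes on the main diagonal. -/
noncomputable def durfee (l : ℕ → ℕ) : ℕ := Set.ncard {i | i < l i}

/-- The number of boxes of the Young diagram. -/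
noncomputable def psize (l : ℕ → ℕ) : ℕ := Set.ncard {p : ℕ × ℕ | p.2 < l p.1}

/-- The disparity: (#boxes with odd hook length) - (#boxes with even hook length). -/
noncomputable def dp (l : ℕ → ℕ) : ℤ :=
  (Set.ncard {p : ℕ × ℕ | p.2 < l p.1 ∧ Odd (hookLen l p.1 p.2)} : ℤ) -
  (Set.ncard {p : ℕ × ℕ | p.2 < l p.1 ∧ Even (hookLen l p.1 p.2)} : ℤ)

/-- The set of main diagonal hook lengths. -/
def Dset (l : ℕ → ℕ) : Set ℕ := {x | ∃ i, i < l i ∧ x = hookLen l i i}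

/-- Main diagonal hook lengths congruent to 1 mod 4. -/
def D1 (l : ℕ → ℕ) : Set ℕ := {x ∈ Dset l | x % 4 = 1}

/-- Main diagonal hook lengths congruent to 3 mod 4. -/
def D3 (l : ℕ → ℕ) : Set ℕ := {x ∈ Dset l | x % 4 = 3}

/-- A `t`-core partition: no hook length is divisible by `t`. -/
def IsCore (l : ℕ → ℕ) (t : ℕ) : Prop := ∀ i j, j < l i → ¬ (t ∣ hookLen l i j)

/-- `(a,b)` (restricted to indices `< r`, `< s`) is the diagonal sequence pair of the
self-conjugate partition `l`: `D1 l = {4 a i + 1}` with `a` strictly decreasing, and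
`D3 l = {4 b j - 1}` with `b` strictly decreasing and positive. -/
def DiagPair (l : ℕ → ℕ) (r s : ℕ) (a b : ℕ → ℕ) : Prop :=
  StrictAntiOn a (Set.Iio r) ∧ StrictAntiOn b (Set.Iio s) ∧
  (∀ j, j < s → 1 ≤ b j) ∧
  D1 l = {x | ∃ i, i < r ∧ x = 4 * a i + 1} ∧
  D3 l = {x | ∃ j, j < s ∧ x = 4 * b j - 1}

/-- `μ` is the image of the diagonal sequence pair `((a),(b))` under the map `φ`:
the first `r` parts are `a i + (i+1) + s - r` (1-indexed `a_i + i + s - r`), and the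
remaining parts form the conjugate of `γ = (b 0 - s, b 1 - s + 1, …, b (s-1) - 1)`. -/
def PhiImage (r s : ℕ) (a b : ℕ → ℕ) (μ : ℕ → ℕ) : Prop :=
  (∀ i, i < r → (μ i : ℤ) = (a i : ℤ) + (i + 1) + s - r) ∧
  (∀ i, r ≤ i → μ i = Set.ncard {j | j < s ∧ i - r < b j + j - s})

/-- `μ` is the corresponding partition of the self-conjugate partition `l`
under the bijection `φ` of Cho–Huh–Sohn. -/
def Corresponds (l μ : ℕ → ℕ) : Prop :=
  ∃ r s a b, DiagPair l r s a b ∧ PhiImage r s a b μ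

lemma downclosed_iff (S : Set ℕ) (hfin : S.Finite)
    (hdc : ∀ ⦃i j : ℕ⦄, i ≤ j → j ∈ S → i ∈ S) (i : ℕ) : i ∈ S ↔ i < S.ncard := by
  have hc : Sᶜ.Nonempty := by
    rcases Set.eq_empty_or_nonempty Sᶜ with h | h
    · exfalso
      have : S = Set.univ := by
        rw [← Set.compl_empty, ← h, compl_compl]
      exact Set.infinite_univ (this ▸ hfin)
    · exact h
  set k := sInf Sᶜ with hk
  have hkmem : k ∈ Sᶜ := Nat.sInf_mem hc
  have hS : S = Set.Iio k := by
    ext m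
    constructor
    · intro hm
      by_contra hmk
      exact hkmem (hdc (by simpa using hmk) hm)
    · intro hm
      by_contra hmS
      exact absurd (Nat.sInf_le hmS) (by simpa using hm)
  rw [hS]
  simp [Set.ncard_eq_toFinset_card']

lemma lt_conj_iff (p : ℕ → ℕ) (hp : IsPartition p) (i j : ℕ) :
    i < conj p j ↔ j < p i := by
  obtain ⟨hanti, N, hN⟩ := hp
  have hfin : {i | j < p i}.Finite := by
    apply Set.Finite.subset (Set.finite_Iio N)
    intro i hi
    simp only [Set.mem_setOf_eq] at hi
    simp only [Set.mem_Iio]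
    by_contra h
    have : p i ≤ p N := hanti (by omega)
    omega
  have hdc : ∀ ⦃i i' : ℕ⦄, i ≤ i' → i' ∈ {i | j < p i} → i ∈ {i | j < p i} := by
    intro i i' hle hi'
    simp only [Set.mem_setOf_eq] at *
    exact lt_of_lt_of_le hi' (hanti hle)
  exact (downclosed_iff _ hfin hdc i).symm

lemma dualC (p : ℕ → ℕ) (hp : IsPartition p) (u : ℤ) :
    (∃ i : ℕ, (p i : ℤ) - i = u) ↔ ¬ ∃ j : ℕ, (conj p j : ℤ) - j = 1 - u := by
  constructor
  · rintro ⟨i, hi⟩ ⟨j, hj⟩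
    have h1 : i < conj p j ↔ j < p i := lt_conj_iff p hp i j
    have h2 : ((i : ℤ) < (conj p j : ℤ)) ↔ ((j : ℤ) < (p i : ℤ)) := by
      rw [Int.ofNat_lt, Int.ofNat_lt]; exact h1
    omega
  · intro h
    by_contra hno
    push_neg at h hno
    obtain ⟨hanti, N, hN⟩ := hp
    by_cases hu : (p 0 : ℤ) < u
    · -- j := u - 1 ≥ p 0
      have hu1 : 1 ≤ u := by have := (p 0).cast_nonneg (α := ℤ); omega
      set j := (u - 1).toNat with hj
      have hjz : (j : ℤ) = u - 1 := Int.toNat_of_nonneg (by omega)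
      have hjp : ¬ (j < p 0) := by
        intro hcon
        have : (j:ℤ) < (p 0:ℤ) := by exact_mod_cast hcon
        omega
      have hc0 : conj p j = 0 := by
        by_contra hc
        have : 0 < conj p j := Nat.pos_of_ne_zero hc
        rw [lt_conj_iff p ⟨hanti, N, hN⟩ 0 j] at this
        exact hjp this
      exact absurd (by rw [hc0]; push_cast; omega) (h j)
    · push_neg at hu
      set T := {i : ℕ | u < (p i : ℤ) - i} with hT
      have h0T : 0 ∈ T := by
        simp only [hT, Set.mem_setOf_eq, Nat.cast_zero, sub_zero]
        have := hno 0
        simp only [Nat.cast_zero, sub_zero] at this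
        omega
      have hTfin : T.Finite := by
        apply Set.Finite.subset (Set.finite_Iio (N + u.natAbs + 1))
        intro i hi
        simp only [hT, Set.mem_setOf_eq] at hi
        simp only [Set.mem_Iio]
        by_contra hcon
        have hpi : p i = 0 := by
          have : p i ≤ p N := hanti (by omega)
          omega
        rw [hpi] at hi
        have hna : -(u.natAbs : ℤ) ≤ u := by
          rcases Int.natAbs_eq u with h' | h' <;> omega
        push_cast at hi
        omega
      obtain ⟨i, hiT, himax⟩ : ∃ i ∈ T, ∀ i' ∈ T, id i ≤ id i' → id i = id i' := by
        obtain ⟨i, hiT, hm⟩ := Set.Finite.exists_maximalFor id T hTfin ⟨0, h0T⟩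
        exact ⟨i, hiT, fun i' hi' hle => le_antisymm hle (hm hi' hle)⟩
      simp only [id] at himax
      have hi1 : ¬ (i + 1 ∈ T) := by
        intro hcon
        have := himax _ hcon (by omega)
        omega
      simp only [hT, Set.mem_setOf_eq] at hiT hi1
      push_neg at hi1
      have hne : (p (i+1) : ℤ) - (i+1) ≠ u := hno (i+1)
      have hlt : (p (i+1) : ℤ) - (i+1) < u := by omega
      set j := (u + i).toNat with hj
      have hjz : (j : ℤ) = u + i := Int.toNat_of_nonneg (by
        have := (p (i+1)).cast_nonneg (α := ℤ); omega)
      have hg1 : j < p i := by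
        have : (j : ℤ) < (p i : ℤ) := by omega
        exact_mod_cast this
      have hg2 : ¬ (j < p (i+1)) := by
        intro hcon
        have : (j:ℤ) < (p (i+1):ℤ) := by exact_mod_cast hcon
        omega
      rw [← lt_conj_iff p ⟨hanti, N, hN⟩ i j] at hg1
      rw [← lt_conj_iff p ⟨hanti, N, hN⟩ (i+1) j] at hg2
      have : conj p j = i + 1 := by omega
      exact absurd (by rw [this]; push_cast; omega) (h j)


lemma beta_col (p : ℕ → ℕ) (hp : IsPartition p) (x : ℕ) :
    (∃ i, i < conj p 0 ∧ x = hookLen p i 0) ↔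
      ∃ i : ℕ, (p i : ℤ) - i = (x : ℤ) + 1 - conj p 0 := by
  constructor
  · rintro ⟨i, hi, hx⟩
    refine ⟨i, ?_⟩
    have hpi : 0 < p i := (lt_conj_iff p hp i 0).mp hi
    rw [hookLen] at hx
    have h1 : i + 1 ≤ conj p 0 := hi
    zify at hx h1 hpi ⊢
    omega
  · rintro ⟨i, hi⟩
    by_cases hpi : 0 < p i
    · have hic : i < conj p 0 := (lt_conj_iff p hp i 0).mpr hpi
      refine ⟨i, hic, ?_⟩
      rw [hookLen]
      have h1 : i + 1 ≤ conj p 0 := hic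
      zify [hpi, h1]
      omega
    · exfalso
      have hpi0 : p i = 0 := by omega
      rw [hpi0] at hi
      have hic : i < conj p 0 := by
        have : (i:ℤ) < (conj p 0 : ℤ) := by push_cast at hi ⊢; omega
        exact_mod_cast this
      exact hpi ((lt_conj_iff p hp i 0).mp hic)

lemma beta_row (p : ℕ → ℕ) (hp : IsPartition p) (x : ℕ) :
    (∃ j, j < p 0 ∧ x = hookLen p 0 j) ↔
      ∃ j : ℕ, (conj p j : ℤ) - j = (x : ℤ) + 1 - p 0 := by
  constructor
  · rintro ⟨j, hj, hx⟩
    refine ⟨j, ?_⟩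
    have hcj : 0 < conj p j := (lt_conj_iff p hp 0 j).mpr hj
    rw [hookLen] at hx
    have h1 : j + 1 ≤ p 0 := hj
    zify at hx h1 hcj ⊢
    omega
  · rintro ⟨j, hj⟩
    by_cases hcj : 0 < conj p j
    · have hjp : j < p 0 := (lt_conj_iff p hp 0 j).mp hcj
      refine ⟨j, hjp, ?_⟩
      rw [hookLen]
      have h1 : j + 1 ≤ p 0 := hjp
      zify [hcj, h1]
      omega
    · exfalso
      have hcj0 : conj p j = 0 := by omega
      rw [hcj0] at hj
      have hjp : j < p 0 := by
        have : (j:ℤ) < (p 0 : ℤ) := by push_cast at hj ⊢; omega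
        exact_mod_cast this
      exact hcj ((lt_conj_iff p hp 0 j).mpr hjp)

def gam (s : ℕ) (b : ℕ → ℕ) : ℕ → ℕ := fun j => if j < s then b j + j - s else 0

section mu
variable {r s : ℕ} {a b μ : ℕ → ℕ}

lemma bkey (hb : StrictAntiOn b (Set.Iio s)) :
    ∀ k j, j + k < s → b (j + k) + (j + k) ≤ b j + j := by
  intro k
  induction k with
  | zero => intro j _; simp
  | succ k ih =>
    intro j h
    have h1 := ih j (by omega)
    have h2 : b (j + k + 1) < b (j + k) :=
      hb (by simp only [Set.mem_Iio]; omega) (by simp only [Set.mem_Iio]; omega) (by omega)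
    have h3 : j + (k + 1) = j + k + 1 := by omega
    rw [h3]
    omega

lemma bge (hb : StrictAntiOn b (Set.Iio s)) (hb1 : ∀ j, j < s → 1 ≤ b j) :
    ∀ j, j < s → s ≤ b j + j := by
  intro j hj
  have h1 := bkey hb (s - 1 - j) j (by omega)
  have h2 := hb1 (s - 1) (by omega)
  have h3 : j + (s - 1 - j) = s - 1 := by omega
  rw [h3] at h1
  omega

lemma gam_partition (hb : StrictAntiOn b (Set.Iio s)) (hb1 : ∀ j, j < s → 1 ≤ b j) :
    IsPartition (gam s b) := by
  constructor
  · intro j j' hle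
    by_cases hj' : j' < s
    · have hj : j < s := by omega
      have h1 := bkey hb (j' - j) j (by omega)
      have : j + (j' - j) = j' := by omega
      rw [this] at h1
      simp only [gam, if_pos hj, if_pos hj']
      omega
    · simp only [gam, if_neg hj']
      omega
  · exact ⟨s, by simp [gam]⟩

lemma gam_att (hb : StrictAntiOn b (Set.Iio s)) (hb1 : ∀ j, j < s → 1 ≤ b j) (v : ℤ) :
    (∃ j : ℕ, (gam s b j : ℤ) - j = v) ↔
      (∃ j, j < s ∧ (b j : ℤ) - s = v) ∨ v ≤ -(s : ℤ) := by
  constructor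
  · rintro ⟨j, hj⟩
    by_cases hjs : j < s
    · left
      refine ⟨j, hjs, ?_⟩
      have hge := bge hb hb1 j hjs
      simp only [gam, if_pos hjs] at hj
      zify [hge] at hj
      omega
    · right
      simp only [gam, if_neg hjs] at hj
      push_cast at hj
      omega
  · rintro (⟨j, hjs, he⟩ | hv)
    · refine ⟨j, ?_⟩
      have hge := bge hb hb1 j hjs
      simp only [gam, if_pos hjs]
      zify [hge]
      omega
    · refine ⟨(-v).toNat, ?_⟩
      have h1 : ((-v).toNat : ℤ) = -v := Int.toNat_of_nonneg (by
        have : (0:ℤ) ≤ s := Int.ofNat_nonneg s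
        omega)
      have hns : ¬ ((-v).toNat < s) := by
        by_contra hcon
        have : ((-v).toNat : ℤ) < (s : ℤ) := by exact_mod_cast hcon
        omega
      simp only [gam, if_neg hns]
      push_cast
      omega

lemma mu_tail (hpt : ∀ i, r ≤ i → μ i = Set.ncard {j | j < s ∧ i - r < b j + j - s}) :
    ∀ k, μ (r + k) = conj (gam s b) k := by
  intro k
  rw [hpt (r + k) (by omega), conj]
  congr 1
  ext j
  simp only [Set.mem_setOf_eq, gam]
  by_cases hjs : j < s
  · simp only [if_pos hjs]
    constructor
    · rintro ⟨_, h⟩; omega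
    · intro h; exact ⟨hjs, by omega⟩
  · simp only [if_neg hjs]
    omega

lemma mu_att (hb : StrictAntiOn b (Set.Iio s)) (hb1 : ∀ j, j < s → 1 ≤ b j)
    (hph : ∀ i, i < r → (μ i : ℤ) = (a i : ℤ) + (i + 1) + s - r)
    (hpt : ∀ i, r ≤ i → μ i = Set.ncard {j | j < s ∧ i - r < b j + j - s}) (u : ℤ) :
    (∃ i : ℕ, (μ i : ℤ) - i = u) ↔
      (∃ i, i < r ∧ u = (a i : ℤ) + 1 + s - r) ∨
      (u ≤ (s : ℤ) - r ∧ ∀ j, j < s → (b j : ℤ) ≠ (s : ℤ) - r + 1 - u) := by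
  have hgam := gam_partition hb hb1
  have hd := dualC (gam s b) hgam (1 - (u + r))
  rw [show (1:ℤ) - (1 - (u + (r:ℤ))) = u + r by ring] at hd
  constructor
  · rintro ⟨i, hi⟩
    rcases Nat.lt_or_ge i r with hir | hir
    · left
      refine ⟨i, hir, ?_⟩
      rw [hph i hir] at hi
      push_cast at hi ⊢
      omega
    · right
      have hik : i = r + (i - r) := by omega
      rw [hik, mu_tail hpt (i - r)] at hi
      have hex : ∃ k : ℕ, (conj (gam s b) k : ℤ) - k = u + r :=
        ⟨i - r, by push_cast at hi ⊢; omega⟩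
      have hng : ¬ ∃ j : ℕ, (gam s b j : ℤ) - j = 1 - (u + r) := by
        intro hA
        exact (hd.mp hA) hex
      rw [gam_att hb hb1] at hng
      push_neg at hng
      obtain ⟨hng1, hng2⟩ := hng
      constructor
      · omega
      · intro j hjs hbe
        exact (hng1 j hjs) (by omega)
  · rintro (⟨i, hir, hu⟩ | ⟨hus, hbne⟩)
    · exact ⟨i, by rw [hph i hir]; push_cast; omega⟩
    · have hng : ¬ ∃ j : ℕ, (gam s b j : ℤ) - j = 1 - (u + r) := by
        rw [gam_att hb hb1]
        push_neg
        refine ⟨fun j hjs => ?_, by omega⟩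
        have := hbne j hjs
        omega
      have hex : ∃ k : ℕ, (conj (gam s b) k : ℤ) - k = u + r := by
        by_contra hcon
        exact hng (hd.mpr (by
          intro hB
          exact hcon hB))
      obtain ⟨k, hk⟩ := hex
      refine ⟨r + k, ?_⟩
      rw [mu_tail hpt k]
      push_cast at hk ⊢
      omega
end mu

theorem half_even_beta_set (l μ : ℕ → ℕ)
    (hl : IsPartition l) (hsc : SelfConj l) (hμ : IsPartition μ)
    (hcorr : Corresponds l μ) (h0 : 0 < l 0) :
    (hookLen l 0 0 % 4 = 1 →
      {x | ∃ i, i < conj l 0 ∧ Even (hookLen l i 0) ∧ x = hookLen l i 0 / 2} =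
        {x | ∃ j, j < μ 0 ∧ x = hookLen μ 0 j}) ∧
    (hookLen l 0 0 % 4 = 3 →
      {x | ∃ i, i < conj l 0 ∧ Even (hookLen l i 0) ∧ x = hookLen l i 0 / 2} =
        {x | ∃ i, i < conj μ 0 ∧ x = hookLen μ i 0}) := by
  obtain ⟨r, s, a, b, ⟨ha, hb, hb1, hD1, hD3⟩, hph, hpt⟩ := hcorr
  have hsc' : conj l = l := hsc
  have hc0 : conj l 0 = l 0 := by rw [hsc']
  have hanti := hl.1
  -- diagonal attainment characterization
  have hattD : ∀ u : ℤ, 1 ≤ u →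
      ((∃ i : ℕ, (l i : ℤ) - i = u) ↔
        (∃ i, i < r ∧ u = 2 * (a i : ℤ) + 1) ∨ (∃ j, j < s ∧ u = 2 * (b j : ℤ))) := by
    intro u hu
    constructor
    · rintro ⟨i, hi⟩
      have hilt : i < l i := by
        have : (i : ℤ) < (l i : ℤ) := by omega
        exact_mod_cast this
      have hdval : (hookLen l i i : ℤ) = 2 * ((l i : ℤ) - i) - 1 := by
        rw [hookLen, hsc']
        have : i + 1 ≤ l i := hilt
        push_cast [this]
        omega
      have hdmem : hookLen l i i ∈ Dset l := ⟨i, hilt, rfl⟩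
      have hodd : hookLen l i i % 2 = 1 := by omega
      rcases (by omega : hookLen l i i % 4 = 1 ∨ hookLen l i i % 4 = 3) with h14 | h34
      · have : hookLen l i i ∈ D1 l := ⟨hdmem, h14⟩
        rw [hD1] at this
        obtain ⟨i', hi'r, heq⟩ := this
        left
        refine ⟨i', hi'r, ?_⟩
        have : (hookLen l i i : ℤ) = 4 * (a i' : ℤ) + 1 := by exact_mod_cast heq
        omega
      · have : hookLen l i i ∈ D3 l := ⟨hdmem, h34⟩
        rw [hD3] at this
        obtain ⟨j', hj's, heq⟩ := this
        right
        refine ⟨j', hj's, ?_⟩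
        have hbj := hb1 j' hj's
        have : (hookLen l i i : ℤ) = 4 * (b j' : ℤ) - 1 := by
          rw [heq]; push_cast [hbj]; omega
        omega
    · rintro (⟨i, hir, hu'⟩ | ⟨j, hjs, hu'⟩)
      · have hmem : (4 * a i + 1) ∈ D1 l := by
          rw [hD1]; exact ⟨i, hir, rfl⟩
        obtain ⟨⟨i', hilt, heq⟩, _⟩ := hmem
        refine ⟨i', ?_⟩
        have hdval : (hookLen l i' i' : ℤ) = 2 * ((l i' : ℤ) - i') - 1 := by
          rw [hookLen, hsc']
          have : i' + 1 ≤ l i' := hilt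
          push_cast [this]
          omega
        have : ((4 * a i + 1 : ℕ) : ℤ) = (hookLen l i' i' : ℤ) := by exact_mod_cast heq
        push_cast at this
        omega
      · have hbj := hb1 j hjs
        have hmem : (4 * b j - 1) ∈ D3 l := by
          rw [hD3]; exact ⟨j, hjs, rfl⟩
        obtain ⟨⟨i', hilt, heq⟩, _⟩ := hmem
        refine ⟨i', ?_⟩
        have hdval : (hookLen l i' i' : ℤ) = 2 * ((l i' : ℤ) - i') - 1 := by
          rw [hookLen, hsc']
          have : i' + 1 ≤ l i' := hilt
          push_cast [this]
          omega
        have : ((4 * b j - 1 : ℕ) : ℤ) = (hookLen l i' i' : ℤ) := by exact_mod_cast heq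
        push_cast [hbj] at this
        omega
  have hattK : ∀ u : ℤ,
      (∃ i : ℕ, (l i : ℤ) - i = u) ↔ ¬ ∃ i : ℕ, (l i : ℤ) - i = 1 - u := by
    intro u
    have := dualC l hl u
    simpa only [hsc'] using this
  have hmono : ∀ u : ℤ, (∃ i : ℕ, (l i : ℤ) - i = u) → u ≤ (l 0 : ℤ) := by
    rintro u ⟨i, hi⟩
    have : l i ≤ l 0 := hanti (Nat.zero_le i)
    have : (l i : ℤ) ≤ (l 0 : ℤ) := by exact_mod_cast this
    omega
  have hLHS : ∀ x : ℕ,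
      ((∃ i, i < conj l 0 ∧ Even (hookLen l i 0) ∧ x = hookLen l i 0 / 2) ↔
        ∃ i : ℕ, (l i : ℤ) - i = 2 * (x : ℤ) + 1 - l 0) := by
    intro x
    have hbc := beta_col l hl (2 * x)
    have hval : ((conj l 0 : ℤ)) = (l 0 : ℤ) := by exact_mod_cast hc0
    constructor
    · rintro ⟨i, hi, hev, hx⟩
      obtain ⟨c, hcc⟩ := hev
      have h2x : 2 * x = hookLen l i 0 := by omega
      obtain ⟨i', he⟩ := hbc.mp ⟨i, hi, h2x⟩
      exact ⟨i', by push_cast at he; omega⟩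
    · rintro ⟨i, hi⟩
      obtain ⟨i', hi', hx'⟩ := hbc.mpr ⟨i, by push_cast; omega⟩
      exact ⟨i', hi', ⟨hookLen l i' 0 / 2, by omega⟩, by omega⟩
  constructor
  · -- δ₁ ≡ 1 (mod 4) : l 0 is odd
    intro h1
    have hδ : hookLen l 0 0 = 2 * l 0 - 1 := by
      rw [hookLen, hc0]; omega
    obtain ⟨m, hm⟩ : ∃ m, l 0 = 2 * m + 1 := ⟨l 0 / 2, by omega⟩
    -- r ≥ 1 and a 0 = m
    obtain ⟨i₀, hi₀r, ha₀⟩ : ∃ i, i < r ∧ ((l 0 : ℤ)) = 2 * (a i : ℤ) + 1 := by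
      have h := (hattD (l 0 : ℤ) (by exact_mod_cast h0)).mp ⟨0, by simp⟩
      rcases h with h | ⟨j, hjs, hbj⟩
      · exact h
      · exfalso
        have : ((l 0 : ℕ) : ℤ) = 2 * m + 1 := by exact_mod_cast hm
        omega
    have hr1 : 0 < r := by omega
    have ha0m : (a 0 : ℤ) = (m : ℤ) := by
      have hle : a i₀ ≤ a 0 := by
        rcases Nat.eq_zero_or_pos i₀ with h | h
        · rw [h]
        · exact le_of_lt (ha (Set.mem_Iio.mpr hr1) (Set.mem_Iio.mpr hi₀r) h)
      have hup : (a 0 : ℤ) ≤ m := by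
        have hatt := (hattD (2 * (a 0 : ℤ) + 1) (by omega)).mpr
          (Or.inl ⟨0, hr1, rfl⟩)
        have := hmono _ hatt
        have hl0 : ((l 0 : ℕ) : ℤ) = 2 * m + 1 := by exact_mod_cast hm
        omega
      have hi₀m : (a i₀ : ℤ) = m := by
        have hl0 : ((l 0 : ℕ) : ℤ) = 2 * m + 1 := by exact_mod_cast hm
        omega
      have : (a i₀ : ℤ) ≤ (a 0 : ℤ) := by exact_mod_cast hle
      omega
    have hμ0 : (μ 0 : ℤ) = (m : ℤ) + 1 + s - r := by
      rw [hph 0 hr1]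
      push_cast
      omega
    ext x
    simp only [Set.mem_setOf_eq]
    rw [hLHS x, beta_row μ hμ x]
    have hdμ := dualC μ hμ ((μ 0 : ℤ) - x)
    rw [show (1 : ℤ) - ((μ 0 : ℤ) - x) = (x : ℤ) + 1 - μ 0 by ring] at hdμ
    rw [iff_not_comm.mp hdμ, mu_att hb hb1 hph hpt ((μ 0 : ℤ) - x)]
    have hl0 : ((l 0 : ℕ) : ℤ) = 2 * m + 1 := by exact_mod_cast hm
    by_cases hxm : (x : ℤ) ≤ m
    · -- low part
      have hK := hattK (2 * (x : ℤ) + 1 - l 0)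
      rw [show (1 : ℤ) - (2 * (x : ℤ) + 1 - l 0) = 2 * ((m : ℤ) - x) + 1 by omega] at hK
      rw [hK]
      have hD := hattD (2 * ((m : ℤ) - x) + 1) (by omega)
      rw [hD]
      constructor
      · intro hnot
        rintro (⟨i, hir, hai⟩ | ⟨hus, _⟩)
        · exact hnot (Or.inl ⟨i, hir, by omega⟩)
        · omega
      · intro hnot
        rintro (⟨i, hir, hai⟩ | ⟨j, hjs, hbj⟩)
        · exact hnot (Or.inl ⟨i, hir, by omega⟩)
        · omega
    · -- high part
      have hD := hattD (2 * (x : ℤ) + 1 - l 0) (by omega)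
      rw [hD]
      constructor
      · rintro (⟨i, hir, hai⟩ | ⟨j, hjs, hbj⟩)
        · omega
        · rintro (⟨i, hir, hai⟩ | ⟨hus, hbne⟩)
          · omega
          · exact (hbne j hjs) (by omega)
      · intro hnot
        right
        by_contra hno
        push_neg at hno
        exact hnot (Or.inr ⟨by omega, fun j hjs => by
          have := hno j hjs
          omega⟩)
  · -- δ₁ ≡ 3 (mod 4) : l 0 is even
    intro h3
    have hδ : hookLen l 0 0 = 2 * l 0 - 1 := by
      rw [hookLen, hc0]; omega
    obtain ⟨m, hm⟩ : ∃ m, l 0 = 2 * m := ⟨l 0 / 2, by omega⟩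
    have hl0 : ((l 0 : ℕ) : ℤ) = 2 * m := by exact_mod_cast hm
    -- s ≥ 1 and b 0 = m
    obtain ⟨j₀, hj₀s, hb₀⟩ : ∃ j, j < s ∧ ((l 0 : ℤ)) = 2 * (b j : ℤ) := by
      have h := (hattD (l 0 : ℤ) (by exact_mod_cast h0)).mp ⟨0, by simp⟩
      rcases h with ⟨i, hir, hai⟩ | h
      · exfalso; omega
      · exact h
    have hs1 : 0 < s := by omega
    have hb0m : (b 0 : ℤ) = (m : ℤ) := by
      have hle : b j₀ ≤ b 0 := by
        rcases Nat.eq_zero_or_pos j₀ with h | h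
        · rw [h]
        · exact le_of_lt (hb (Set.mem_Iio.mpr hs1) (Set.mem_Iio.mpr hj₀s) h)
      have hup : (b 0 : ℤ) ≤ m := by
        have hatt := (hattD (2 * (b 0 : ℤ)) (by
          have := hb1 0 hs1
          omega)).mpr (Or.inr ⟨0, hs1, rfl⟩)
        have := hmono _ hatt
        omega
      have : (b j₀ : ℤ) ≤ (b 0 : ℤ) := by exact_mod_cast hle
      omega
    have hsm : s ≤ m := by
      have := bge hb hb1 0 hs1
      have hb0m' : b 0 = m := by exact_mod_cast hb0m
      omega
    -- number of positive parts of μ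
    have hcμ : conj μ 0 = r + (m - s) := by
      have hgam := gam_partition hb hb1
      have hg0 : gam s b 0 = m - s := by
        simp only [gam, if_pos hs1]
        have hb0m' : b 0 = m := by exact_mod_cast hb0m
        omega
      have hK0 : μ (r + (m - s)) = 0 := by
        rw [mu_tail hpt (m - s)]
        by_contra hcon
        have hpos : 0 < conj (gam s b) (m - s) := Nat.pos_of_ne_zero hcon
        rw [lt_conj_iff (gam s b) hgam 0 (m - s), hg0] at hpos
        omega
      have hup : conj μ 0 ≤ r + (m - s) := by
        by_contra hcon
        push_neg at hcon
        have := (lt_conj_iff μ hμ (r + (m - s)) 0).mp hcon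
        omega
      have hlow : r + (m - s) ≤ conj μ 0 := by
        rcases Nat.eq_zero_or_pos (r + (m - s)) with hK | hK
        · omega
        · have hpos : 0 < μ (r + (m - s) - 1) := by
            rcases Nat.lt_or_ge s m with hsm' | hsm'
            · have hidx : r + (m - s) - 1 = r + (m - s - 1) := by omega
              rw [hidx, mu_tail hpt (m - s - 1)]
              rw [lt_conj_iff (gam s b) hgam 0 (m - s - 1), hg0]
              omega
            · have hsm'' : s = m := by omega
              have hr1 : 0 < r := by omega
              have hidx : r + (m - s) - 1 = r - 1 := by omega
              rw [hidx]
              have := hph (r - 1) (by omega)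
              have hcast : ((r : ℤ) - 1 + 1) = (r : ℤ) := by ring
              have : (μ (r - 1) : ℤ) = (a (r - 1) : ℤ) + s := by
                rw [this]
                push_cast [Nat.sub_add_cancel hr1]
                omega
              have hs' : (0 : ℤ) < s := by exact_mod_cast hs1
              have : (0 : ℤ) < (μ (r - 1) : ℤ) := by omega
              exact_mod_cast this
          have := (lt_conj_iff μ hμ (r + (m - s) - 1) 0).mpr hpos
          omega
      omega
    have hcμz : ((conj μ 0 : ℕ) : ℤ) = (r : ℤ) + m - s := by
      rw [hcμ]; push_cast; omega
    ext x
    simp only [Set.mem_setOf_eq]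
    rw [hLHS x, beta_col μ hμ x, mu_att hb hb1 hph hpt ((x : ℤ) + 1 - conj μ 0)]
    by_cases hxm : (m : ℤ) ≤ x
    · -- high part
      have hD := hattD (2 * (x : ℤ) + 1 - l 0) (by omega)
      rw [hD]
      constructor
      · rintro (⟨i, hir, hai⟩ | ⟨j, hjs, hbj⟩)
        · exact Or.inl ⟨i, hir, by omega⟩
        · exfalso; omega
      · rintro (⟨i, hir, hai⟩ | ⟨hus, _⟩)
        · exact Or.inl ⟨i, hir, by omega⟩
        · exfalso; omega
    · -- low part
      have hK := hattK (2 * (x : ℤ) + 1 - l 0)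
      rw [show (1 : ℤ) - (2 * (x : ℤ) + 1 - l 0) = 2 * ((m : ℤ) - x) by omega] at hK
      rw [hK]
      have hD := hattD (2 * ((m : ℤ) - x)) (by omega)
      rw [hD]
      constructor
      · intro hnot
        right
        constructor
        · omega
        · intro j hjs hbj
          exact hnot (Or.inr ⟨j, hjs, by omega⟩)
      · rintro (⟨i, hir, hai⟩ | ⟨hus, hbne⟩)
        · omega
        · rintro (⟨i, hir, hai⟩ | ⟨j, hjs, hbj⟩)
          · omega
          · exact (hbne j hjs) (by omega)
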